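/- Let σ be a d × d diagonal density matrix (nonnegative diagonal entries summing to 1). Let S and S′ be disjoint subsets of {1,...,d} of sizes d₁ ≥ d₂ ≥ 1 respectively, and let j, j′ be nonnegative integers such that σ_{ii} ∈ [2^{−j−1}, 2^{−j}] for all i ∈ S and σ_{ii} ∈ [2^{−j′−1}, 2^{−j′}] for all i ∈ S′. Let W be a d₁ × d₂ complex matrix with orthonormal columns (Wᴴ W = I), and let σ_W = σ + D_W, where D_W is the d × d Hermitian matrix that is zero except in the off-diagonal blocks with rows indexed by S and columns indexed by S′ (and the adjoint block), where it equals (ε/(2 d₂)) · W (respectively (ε/(2 d₂)) · Wᴴ). If 0 < ε ≤ d₂ · 2^{−j/2 − j′/2}, then ‖σ − σ_W‖₁ ≥ ε and σ_W is a density matrix (positive semidefinite with trace 1). -/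

import Mathlib

open Matrix ComplexOrder

/-- The trace norm (Schatten-1 norm) of a complex matrix: `‖M‖₁ = Tr √(Mᴴ M)`. -/
noncomputable def traceNorm {m n : Type*} [Fintype m] [Fintype n] [DecidableEq n]
    (B : Matrix m n ℂ) : ℝ :=
  ((Matrix.posSemidef_conjTranspose_mul_self B).1.eigenvectorUnitary.1 *
    diagonal (((↑) : ℝ → ℂ) ∘ (fun x : ℝ => √x) ∘ (Matrix.posSemidef_conjTranspose_mul_self B).1.eigenvalues) *
    (star (Matrix.posSemidef_conjTranspose_mul_self B).1.eigenvectorUnitary : Matrix n n ℂ)).trace.re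

open scoped MatrixOrder in
lemma traceNorm_eq_of_sq {m n : Type*} [Fintype m] [Fintype n] [DecidableEq n]
    (B : Matrix m n ℂ) (M : Matrix n n ℂ) (hM : M.PosSemidef) (hsq : M * M = Bᴴ * B) :
    traceNorm B = M.trace.re := by
  have h1 : ((Matrix.posSemidef_conjTranspose_mul_self B).1.eigenvectorUnitary.1 *
      diagonal (((↑) : ℝ → ℂ) ∘ (fun x : ℝ => √x) ∘
        (Matrix.posSemidef_conjTranspose_mul_self B).1.eigenvalues) *
      (star (Matrix.posSemidef_conjTranspose_mul_self B).1.eigenvectorUnitary : Matrix n n ℂ))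
      = cfc Real.sqrt (Bᴴ * B) := by
    rw [(Matrix.posSemidef_conjTranspose_mul_self B).1.cfc_eq]
    rfl
  have h2 : cfc Real.sqrt (Bᴴ * B) = M := by
    rw [← cfcₙ_eq_cfc, ← CFC.sqrt_eq_real_sqrt _ (Matrix.posSemidef_conjTranspose_mul_self B).nonneg,
      CFC.sqrt_unique hsq hM.nonneg]
  unfold traceNorm
  rw [h1, h2]

lemma vmv_mul {n : Type*} [Fintype n] (a b c e : n → ℂ) :
    vecMulVec a b * vecMulVec c e = (b ⬝ᵥ c) • vecMulVec a e := by
  ext i j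
  simp only [mul_apply, vecMulVec_apply, Matrix.smul_apply, dotProduct, Finset.sum_mul, smul_eq_mul]
  exact Finset.sum_congr rfl fun l _ => by ring

lemma vmv_ct {n : Type*} [Fintype n] (a b : n → ℂ) :
    (vecMulVec a (star b))ᴴ = vecMulVec b (star a) := by
  ext i j
  simp [conjTranspose_apply, vecMulVec_apply, mul_comm]

lemma vmv_mulVec {n : Type*} [Fintype n] (a b x : n → ℂ) :
    vecMulVec a b *ᵥ x = (b ⬝ᵥ x) • a := by
  ext i
  simp only [mulVec, dotProduct, vecMulVec_apply, Pi.smul_apply, smul_eq_mul, Finset.sum_mul]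
  exact Finset.sum_congr rfl fun l _ => by ring

lemma vmv_trace {n : Type*} [Fintype n] [DecidableEq n] (a b : n → ℂ) :
    (vecMulVec a b).trace = a ⬝ᵥ b := by
  simp [trace, vecMulVec_apply, dotProduct, Matrix.diag]

lemma vmv_psd {n : Type*} [Fintype n] (a : n → ℂ) :
    (vecMulVec a (star a)).PosSemidef := by
  refine PosSemidef.of_dotProduct_mulVec_nonneg (vmv_ct a a) fun x => ?_
  rw [vmv_mulVec, dotProduct_smul]
  have h : star x ⬝ᵥ a = star (star a ⬝ᵥ x) := by
    simp [dotProduct, Finset.sum_comm, mul_comm]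
  rw [smul_eq_mul, h]
  exact mul_star_self_nonneg _

lemma aux_sum_collapse {ι κ : Type*} [Fintype ι] [Fintype κ] [DecidableEq κ]
    (f : ι ↪ κ) (h : κ → ℂ) (hsupp : ∀ i, (∀ k, i ≠ f k) → h i = 0) :
    ∑ i, h i = ∑ k, h (f k) := by
  rw [← Finset.sum_map Finset.univ f h]
  exact (Finset.sum_subset (Finset.subset_univ _)
    (fun i _ hi => hsupp i (fun k hk => hi (by simp [hk])))).symm

lemma aux_dot_self {n : Type*} [Fintype n] (y : n → ℂ) :
    star y ⬝ᵥ y = ((∑ i, ‖y i‖ ^ 2 : ℝ) : ℂ) := by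
  push_cast
  refine Finset.sum_congr rfl fun i _ => ?_
  rw [Pi.star_apply, Complex.star_def, mul_comm, Complex.mul_conj]
  norm_cast
  simp [Complex.normSq_eq_norm_sq]


lemma aux_star_mul_self (z : ℂ) : star z * z = ((‖z‖ ^ 2 : ℝ) : ℂ) := by
  rw [Complex.star_def, mul_comm, Complex.mul_conj]
  norm_cast
  simp [Complex.normSq_eq_norm_sq]

lemma aux_star_dot {n : Type*} [Fintype n] (x y : n → ℂ) :
    star (star x ⬝ᵥ y) = star y ⬝ᵥ x := by
  simp [dotProduct, star_sum, mul_comm]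

lemma aux_sum_mulVec {n ι : Type*} [Fintype n] [Fintype ι]
    (A : ι → Matrix n n ℂ) (x : n → ℂ) :
    (∑ k, A k) *ᵥ x = ∑ k, (A k *ᵥ x) := by
  ext i
  simp only [mulVec, dotProduct, Matrix.sum_apply, Finset.sum_apply, Finset.sum_mul]
  rw [Finset.sum_comm]

lemma aux_dot_sum {n ι : Type*} [Fintype n] [Fintype ι]
    (x : n → ℂ) (y : ι → n → ℂ) :
    x ⬝ᵥ (∑ k, y k) = ∑ k, x ⬝ᵥ y k := by
  simp only [dotProduct, Finset.sum_apply, Finset.mul_sum]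
  rw [Finset.sum_comm]

/-- (Lemma `rhoW_facts`) Perturbing a diagonal density matrix `σ`
in the off-diagonal block indexed by disjoint bucket sets `S = range f`,
`S' = range g` (of sizes `d₁ ≥ d₂ ≥ 1`, with eigenvalues in `[2^{-j-1}, 2^{-j}]`
and `[2^{-j'-1}, 2^{-j'}]` respectively) by `(ε/(2d₂))·W` for `W` with orthonormal
columns: if `0 < ε ≤ d₂·2^{-j/2-j'/2}`, then `σ_W = σ + D_W` is `ε`-far from `σ`
in trace norm and is a density matrix. -/
theorem offdiag_perturbation_valid
    {d d₁ d₂ : ℕ} (hd₂ : 1 ≤ d₂) (hd₁₂ : d₂ ≤ d₁)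
    (lam : Fin d → ℝ) (hnn : ∀ i, 0 ≤ lam i) (hsum1 : ∑ i, lam i = 1)
    (f : Fin d₁ ↪ Fin d) (g : Fin d₂ ↪ Fin d)
    (hdisj : ∀ k k', f k ≠ g k')
    (j j' : ℕ)
    (hfS : ∀ k, lam (f k) ∈ Set.Icc ((2 : ℝ) ^ (-(j : ℝ) - 1)) ((2 : ℝ) ^ (-(j : ℝ))))
    (hgS : ∀ k, lam (g k) ∈ Set.Icc ((2 : ℝ) ^ (-(j' : ℝ) - 1)) ((2 : ℝ) ^ (-(j' : ℝ))))
    (W : Matrix (Fin d₁) (Fin d₂) ℂ) (hW : Wᴴ * W = 1)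
    (ε : ℝ) (hε : 0 < ε) (hεle : ε ≤ (d₂ : ℝ) * (2 : ℝ) ^ (-(j : ℝ) / 2 - (j' : ℝ) / 2))
    (σ DW : Matrix (Fin d) (Fin d) ℂ)
    (hσ : σ = Matrix.diagonal (fun i => (lam i : ℂ)))
    (hDW : ∀ i i', DW i i' =
      ((ε / (2 * d₂) : ℝ) : ℂ) *
        ((∑ k, ∑ k', if i = f k ∧ i' = g k' then W k k' else 0) +
         (∑ k, ∑ k', if i = g k' ∧ i' = f k then star (W k k') else 0))) :
    ε ≤ traceNorm (σ - (σ + DW)) ∧ (σ + DW).PosSemidef ∧ (σ + DW).trace = 1 := by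
  have hd₂R : (0 : ℝ) < d₂ := by exact_mod_cast hd₂
  set c : ℝ := ε / (2 * d₂) with hc
  have hc0 : 0 < c := by positivity
  -- the bucket vectors
  set u : Fin d₂ → Fin d → ℂ := fun k' i => ∑ k, if i = f k then W k k' else 0 with hu
  set v : Fin d₂ → Fin d → ℂ := fun k' i => if i = g k' then 1 else 0 with hv
  have hstarv : ∀ k', star (v k') = v k' := by
    intro k'; funext i; simp [hv, apply_ite]
  have hu_at : ∀ k k', u k' (f k) = W k k' := by
    intro k k'; simp [hu, f.injective.eq_iff]
  have hu_off : ∀ (k' : Fin d₂) i, (∀ k, i ≠ f k) → u k' i = 0 := by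
    intro k' i hi; simp only [hu]
    exact Finset.sum_eq_zero fun k _ => if_neg (hi k)
  have huu : ∀ k' l', star (u k') ⬝ᵥ u l' = if k' = l' then 1 else 0 := by
    intro k' l'
    have h1 : star (u k') ⬝ᵥ u l' = ∑ k, star (W k k') * W k l' := by
      rw [dotProduct, aux_sum_collapse f _ (fun i hi => by
        simp [hu_off _ i hi])]
      exact Finset.sum_congr rfl fun k _ => by rw [Pi.star_apply, hu_at, hu_at]
    have h2 := congrFun (congrFun hW k') l'
    simp only [mul_apply, conjTranspose_apply, one_apply] at h2
    rw [h1, ← h2]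
  have hvv : ∀ k' l', star (v k') ⬝ᵥ v l' = if k' = l' then 1 else 0 := by
    intro k' l'
    rw [dotProduct, aux_sum_collapse g _ (fun i hi => by
      simp [hv, if_neg (hi l')])]
    simp [hv, g.injective.eq_iff, Finset.sum_ite_eq, eq_comm]
  have hvu : ∀ k' l', star (v k') ⬝ᵥ u l' = 0 := by
    intro k' l'
    rw [dotProduct]
    refine Finset.sum_eq_zero fun i _ => ?_
    rcases eq_or_ne i (g k') with rfl | hne
    · rw [hu_off _ _ (fun k hk => hdisj k k' hk.symm), mul_zero]
    · simp [hv, hne]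
  have huv : ∀ k' l', star (u k') ⬝ᵥ v l' = 0 := by
    intro k' l'
    rw [dotProduct]
    refine Finset.sum_eq_zero fun i _ => ?_
    rcases eq_or_ne i (g l') with rfl | hne
    · rw [Pi.star_apply, hu_off _ _ (fun k hk => hdisj k l' hk.symm), star_zero, zero_mul]
    · simp [hv, hne]
  -- DW as a sum of rank-one pieces
  have hDWeq : DW = (c : ℂ) •
      ∑ k', (vecMulVec (u k') (star (v k')) + vecMulVec (v k') (star (u k'))) := by
    ext i i'
    rw [hDW]
    simp only [Matrix.smul_apply, Matrix.sum_apply, Matrix.add_apply, vecMulVec_apply, smul_eq_mul]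
    congr 1
    rw [Finset.sum_add_distrib]
    congr 1
    · rw [Finset.sum_comm]
      refine Finset.sum_congr rfl fun k' _ => ?_
      rcases eq_or_ne i' (g k') with h | h
      · simp [Pi.star_apply, hv, hu, h]
      · simp only [Pi.star_apply, hv, if_neg h, star_zero, mul_zero]
        exact Finset.sum_eq_zero fun k _ => if_neg (fun hh => h hh.2)
    · rw [Finset.sum_comm]
      refine Finset.sum_congr rfl fun k' _ => ?_
      rcases eq_or_ne i (g k') with h | h
      · simp [hv, hu, h, star_sum, apply_ite (star (R := ℂ))]
      · simp only [hv, if_neg h, zero_mul]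
        exact Finset.sum_eq_zero fun k _ => if_neg (fun hh => h hh.1)
  -- projection algebra
  set X : Matrix (Fin d) (Fin d) ℂ :=
    ∑ k', (vecMulVec (u k') (star (v k')) + vecMulVec (v k') (star (u k'))) with hX
  set N : Matrix (Fin d) (Fin d) ℂ :=
    ∑ k', (vecMulVec (u k') (star (u k')) + vecMulVec (v k') (star (v k'))) with hN
  have hXX : X * X = N := by
    rw [hX, hN, Finset.sum_mul_sum]
    refine Finset.sum_congr rfl fun k' _ => ?_
    have hterm : ∀ l', (vecMulVec (u k') (star (v k')) + vecMulVec (v k') (star (u k'))) *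
        (vecMulVec (u l') (star (v l')) + vecMulVec (v l') (star (u l'))) =
        if k' = l' then vecMulVec (u k') (star (u l')) + vecMulVec (v k') (star (v l')) else 0 := by
      intro l'
      rw [add_mul, mul_add, mul_add, vmv_mul, vmv_mul, vmv_mul, vmv_mul,
        hvu, hvv, huu, huv]
      split_ifs with h <;> simp
    simp only [hterm]
    simp
  have hNN : N * N = N := by
    rw [hN, Finset.sum_mul_sum]
    refine Finset.sum_congr rfl fun k' _ => ?_
    have hterm : ∀ l', (vecMulVec (u k') (star (u k')) + vecMulVec (v k') (star (v k'))) *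
        (vecMulVec (u l') (star (u l')) + vecMulVec (v l') (star (v l'))) =
        if k' = l' then vecMulVec (u k') (star (u l')) + vecMulVec (v k') (star (v l')) else 0 := by
      intro l'
      rw [add_mul, mul_add, mul_add, vmv_mul, vmv_mul, vmv_mul, vmv_mul,
        huu, huv, hvu, hvv]
      split_ifs with h <;> simp
    simp only [hterm]
    simp
  have hXh : Xᴴ = X := by
    rw [hX, conjTranspose_sum]
    exact Finset.sum_congr rfl fun k' _ => by
      rw [conjTranspose_add, vmv_ct, vmv_ct, add_comm]
  have hNpsd : N.PosSemidef := by
    rw [hN]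
    exact Finset.sum_induction _ _ (fun A B hA hB => hA.add hB) Matrix.PosSemidef.zero
      (fun k' _ => (vmv_psd (u k')).add (vmv_psd (v k')))
  have hstarc : star ((c : ℝ) : ℂ) = ((c : ℝ) : ℂ) := by
    simp [Complex.star_def, Complex.conj_ofReal]
  have hMpsd : (((c : ℝ) : ℂ) • N).PosSemidef := by
    refine PosSemidef.of_dotProduct_mulVec_nonneg ?_ fun x => ?_
    · show (((c : ℝ) : ℂ) • N)ᴴ = _
      rw [conjTranspose_smul, hstarc, hNpsd.1]
    · rw [smul_mulVec, dotProduct_smul, smul_eq_mul]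
      exact mul_nonneg (Complex.zero_le_real.mpr hc0.le) (hNpsd.dotProduct_mulVec_nonneg x)
  have hDWh : DWᴴ = DW := by
    rw [hDWeq, conjTranspose_smul, hstarc, hXh]
  have hsq : (((c : ℝ) : ℂ) • N) ^ 2 = (-DW)ᴴ * (-DW) := by
    rw [conjTranspose_neg, neg_mul_neg, hDWh, hDWeq, pow_two,
      smul_mul_assoc, mul_smul_comm, smul_smul, smul_mul_assoc, mul_smul_comm,
      smul_smul, hNN, hXX]
  have hsqrt : traceNorm (-DW) = ((((c : ℝ) : ℂ) • N).trace).re :=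
    traceNorm_eq_of_sq _ _ hMpsd (by rw [← hsq, pow_two])
  have htrN : N.trace = (2 * d₂ : ℂ) := by
    rw [hN, trace_sum]
    have h2 : ∀ k' : Fin d₂,
        (vecMulVec (u k') (star (u k')) + vecMulVec (v k') (star (v k'))).trace = 2 := by
      intro k'
      rw [trace_add, vmv_trace, vmv_trace, dotProduct_comm, huu, dotProduct_comm, hvv]
      norm_num
    simp only [h2]
    simp [Finset.card_univ, mul_comm]
  -- part 1 : trace norm
  have hsub : σ - (σ + DW) = -DW := sub_add_cancel_left σ DW
  have hpart1 : ε ≤ traceNorm (σ - (σ + DW)) := by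
    rw [hsub, hsqrt, trace_smul, smul_eq_mul, htrN]
    have hcast : ((c : ℝ) : ℂ) * (2 * (d₂ : ℂ)) = ((c * (2 * d₂) : ℝ) : ℂ) := by
      push_cast; ring
    rw [hcast, Complex.ofReal_re, hc]
    have : ε / (2 * ↑d₂) * (2 * ↑d₂) = ε := by
      field_simp
    rw [this]
  -- part 3 : trace
  have hpart3 : (σ + DW).trace = 1 := by
    have hDWtr : DW.trace = 0 := by
      rw [trace]
      refine Finset.sum_eq_zero fun i _ => ?_
      rw [Matrix.diag_apply, hDW]
      have e1 : ∀ (k : Fin d₁) (k' : Fin d₂), ¬(i = f k ∧ i = g k') :=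
        fun k k' ⟨h1, h2⟩ => hdisj k k' (h1 ▸ h2 ▸ rfl)
      have e2 : ∀ (k' : Fin d₂) (k : Fin d₁), ¬(i = g k' ∧ i = f k) :=
        fun k' k ⟨h1, h2⟩ => hdisj k k' (h2 ▸ h1 ▸ rfl)
      have s1 : (∑ k, ∑ k', if i = f k ∧ i = g k' then W k k' else 0) = 0 :=
        Finset.sum_eq_zero fun k _ => Finset.sum_eq_zero fun k' _ => if_neg (e1 k k')
      have s2 : (∑ k, ∑ k', if i = g k' ∧ i = f k then star (W k k') else 0) = 0 :=
        Finset.sum_eq_zero fun k _ => Finset.sum_eq_zero fun k' _ => if_neg (e2 k' k)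
      rw [s1, s2, add_zero, mul_zero]
    rw [trace_add, hDWtr, add_zero, hσ, trace_diagonal]
    rw [show (1 : ℂ) = ((1 : ℝ) : ℂ) by norm_num, ← hsum1]
    push_cast
    rfl
  -- part 2 : positive semidefinite
  refine ⟨hpart1, PosSemidef.of_dotProduct_mulVec_nonneg ?_ ?_, hpart3⟩
  · show (σ + DW)ᴴ = σ + DW
    rw [conjTranspose_add, hDWh, hσ, diagonal_conjTranspose]
    have : (star fun i => ((lam i : ℝ) : ℂ)) = fun i => ((lam i : ℝ) : ℂ) := by
      funext i
      simp [Complex.star_def, Complex.conj_ofReal]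
    rw [this]
  · intro x
    set a : Fin d₁ → ℂ := fun k => x (f k) with ha
    set b : Fin d₂ → ℂ := fun k' => x (g k') with hb
    set z : ℂ := star a ⬝ᵥ (W *ᵥ b) with hz
    have hvx : ∀ k', star (v k') ⬝ᵥ x = b k' := by
      intro k'
      simp [hv, dotProduct, apply_ite (star (R := ℂ)), ite_mul, Finset.sum_ite_eq', hb]
    have hxv : ∀ k', star x ⬝ᵥ v k' = star (b k') := by
      intro k'
      rw [← star_star (star x ⬝ᵥ v k'), aux_star_dot, hvx]
    have hux : ∀ k', star (u k') ⬝ᵥ x = star (star x ⬝ᵥ u k') :=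
      fun k' => (aux_star_dot x (u k')).symm
    have hxu : ∀ k', star x ⬝ᵥ u k' = ∑ k, star (a k) * W k k' := by
      intro k'
      rw [dotProduct, aux_sum_collapse f _ (fun i hi => by rw [hu_off _ i hi, mul_zero])]
      exact Finset.sum_congr rfl fun k _ => by rw [Pi.star_apply, hu_at]
    have hzsum : ∑ k', (star x ⬝ᵥ u k') * b k' = z := by
      simp only [hxu, Finset.sum_mul]
      rw [Finset.sum_comm, hz]
      simp only [dotProduct, mulVec, Pi.star_apply, Finset.mul_sum]
      exact Finset.sum_congr rfl fun k _ => Finset.sum_congr rfl fun k' _ => by ring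
    have hDWq : star x ⬝ᵥ (DW *ᵥ x) = (((2 * (c * z.re)) : ℝ) : ℂ) := by
      rw [hDWeq, smul_mulVec, dotProduct_smul, smul_eq_mul]
      rw [aux_sum_mulVec, aux_dot_sum]
      have hterm : ∀ k', star x ⬝ᵥ
          ((vecMulVec (u k') (star (v k')) + vecMulVec (v k') (star (u k'))) *ᵥ x)
          = (star x ⬝ᵥ u k') * b k' + star ((star x ⬝ᵥ u k') * b k') := by
        intro k'
        rw [add_mulVec, vmv_mulVec, vmv_mulVec, dotProduct_add, dotProduct_smul,
          dotProduct_smul, hvx, hux, hxv, smul_eq_mul, smul_eq_mul, star_mul']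
        ring
      simp only [hterm]
      rw [Finset.sum_add_distrib, ← star_sum, hzsum, Complex.star_def, Complex.add_conj]
      push_cast
      ring
    set S : ℝ := ∑ i, lam i * ‖x i‖ ^ 2 with hS
    have hσq : star x ⬝ᵥ (σ *ᵥ x) = ((S : ℝ) : ℂ) := by
      rw [hσ, dotProduct]
      have h1 : ∀ i, (star x) i * (Matrix.diagonal (fun i => ((lam i : ℝ) : ℂ)) *ᵥ x) i
          = ((lam i * ‖x i‖ ^ 2 : ℝ) : ℂ) := by
        intro i
        rw [mulVec_diagonal, Pi.star_apply, Complex.ofReal_mul, ← aux_star_mul_self (x i)]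
        ring
      simp only [h1]
      rw [hS]
      norm_cast
    have hqeq : star x ⬝ᵥ ((σ + DW) *ᵥ x) = ((S + 2 * (c * z.re) : ℝ) : ℂ) := by
      rw [add_mulVec, dotProduct_add, hσq, hDWq]
      push_cast
      ring
    rw [hqeq]
    rw [Complex.zero_le_real]
    -- now a real inequality
    set A2 : ℝ := ∑ k, ‖a k‖ ^ 2 with hA2
    set B2 : ℝ := ∑ k', ‖b k'‖ ^ 2 with hB2
    have hA2nn : 0 ≤ A2 := Finset.sum_nonneg fun _ _ => sq_nonneg _
    have hB2nn : 0 ≤ B2 := Finset.sum_nonneg fun _ _ => sq_nonneg _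
    have hznorm : ‖z‖ ≤ Real.sqrt A2 * Real.sqrt B2 := by
      have hna : ‖(WithLp.equiv 2 (Fin d₁ → ℂ)).symm a‖ = Real.sqrt A2 := by
        rw [EuclideanSpace.norm_eq, hA2]
        congr 1
      have hwb2 : ∑ i, ‖(W *ᵥ b) i‖ ^ 2 = B2 := by
        have h1 : star (W *ᵥ b) ⬝ᵥ (W *ᵥ b) = star b ⬝ᵥ b := by
          rw [star_mulVec, dotProduct_mulVec, vecMul_vecMul, hW, vecMul_one]
        have h2 := aux_dot_self (W *ᵥ b)
        rw [h1, aux_dot_self b] at h2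
        exact_mod_cast h2.symm
      have hnw : ‖(WithLp.equiv 2 (Fin d₁ → ℂ)).symm (W *ᵥ b)‖ = Real.sqrt B2 := by
        rw [EuclideanSpace.norm_eq]
        simp only [WithLp.equiv_symm_apply, WithLp.ofLp_toLp]
        rw [hwb2]
      calc ‖z‖ = ‖(inner ℂ ((WithLp.equiv 2 (Fin d₁ → ℂ)).symm a)
            ((WithLp.equiv 2 (Fin d₁ → ℂ)).symm (W *ᵥ b)) : ℂ)‖ := by
            rw [hz, WithLp.equiv_symm_apply, EuclideanSpace.inner_toLp_toLp, dotProduct_comm]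
        _ ≤ ‖(WithLp.equiv 2 (Fin d₁ → ℂ)).symm a‖ *
            ‖(WithLp.equiv 2 (Fin d₁ → ℂ)).symm (W *ᵥ b)‖ := norm_inner_le_norm _ _
        _ = Real.sqrt A2 * Real.sqrt B2 := by rw [hna, hnw]
    have hrez : -(Real.sqrt A2 * Real.sqrt B2) ≤ z.re := by
      have h1 : |z.re| ≤ ‖z‖ := by
        exact Complex.abs_re_le_norm z
      have h2 := neg_abs_le z.re
      linarith
    have hSlow : 2 ^ (-(j : ℝ) - 1) * A2 + 2 ^ (-(j' : ℝ) - 1) * B2 ≤ S := by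
      have hdisjF : Disjoint (Finset.univ.map f) (Finset.univ.map g) := by
        rw [Finset.disjoint_left]
        rintro i hi hgmem
        simp only [Finset.mem_map, Finset.mem_univ, true_and] at hi hgmem
        obtain ⟨k, rfl⟩ := hi
        obtain ⟨k', hk'⟩ := hgmem
        exact hdisj k k' hk'.symm
      have hstep1 : ∑ i ∈ Finset.univ.map f ∪ Finset.univ.map g, lam i * ‖x i‖ ^ 2 ≤ S :=
        Finset.sum_le_sum_of_subset_of_nonneg (Finset.subset_univ _)
          (fun i _ _ => mul_nonneg (hnn i) (sq_nonneg _))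
      rw [Finset.sum_union hdisjF, Finset.sum_map, Finset.sum_map] at hstep1
      have h1 : 2 ^ (-(j : ℝ) - 1) * A2 ≤ ∑ k, lam (f k) * ‖x (f k)‖ ^ 2 := by
        rw [hA2, Finset.mul_sum]
        exact Finset.sum_le_sum fun k _ => mul_le_mul_of_nonneg_right (hfS k).1 (sq_nonneg _)
      have h2 : 2 ^ (-(j' : ℝ) - 1) * B2 ≤ ∑ k', lam (g k') * ‖x (g k')‖ ^ 2 := by
        rw [hB2, Finset.mul_sum]
        exact Finset.sum_le_sum fun k' _ => mul_le_mul_of_nonneg_right (hgS k').1 (sq_nonneg _)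
      linarith
    set α : ℝ := (2 : ℝ) ^ (-(j : ℝ) / 2 - 1 / 2) with hαdef
    set β : ℝ := (2 : ℝ) ^ (-(j' : ℝ) / 2 - 1 / 2) with hβdef
    have two_pos' : (0 : ℝ) < 2 := by norm_num
    have hα2 : α * α = 2 ^ (-(j : ℝ) - 1) := by
      rw [hαdef, ← Real.rpow_add two_pos']
      congr 1
      ring
    have hβ2 : β * β = 2 ^ (-(j' : ℝ) - 1) := by
      rw [hβdef, ← Real.rpow_add two_pos']
      congr 1
      ring
    have hαβ : 2 * (α * β) = 2 ^ (-(j : ℝ) / 2 - (j' : ℝ) / 2) := by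
      rw [hαdef, hβdef, ← Real.rpow_add two_pos']
      nth_rewrite 1 [show (2 : ℝ) = (2 : ℝ) ^ (1 : ℝ) by norm_num]
      rw [← Real.rpow_add two_pos']
      congr 1
      ring
    have hαpos : 0 < α := Real.rpow_pos_of_pos two_pos' _
    have hβpos : 0 < β := Real.rpow_pos_of_pos two_pos' _
    have hcαβ : c ≤ α * β := by
      rw [hc, div_le_iff₀ (by positivity)]
      calc ε ≤ (d₂ : ℝ) * 2 ^ (-(j : ℝ) / 2 - (j' : ℝ) / 2) := hεle
        _ = α * β * (2 * d₂) := by rw [← hαβ]; ring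
    set sa : ℝ := Real.sqrt A2 with hsadef
    set sb : ℝ := Real.sqrt B2 with hsbdef
    have hsa2 : sa * sa = A2 := Real.mul_self_sqrt hA2nn
    have hsb2 : sb * sb = B2 := Real.mul_self_sqrt hB2nn
    have hsann : 0 ≤ sa := Real.sqrt_nonneg _
    have hsbnn : 0 ≤ sb := Real.sqrt_nonneg _
    clear_value sa sb A2 B2 S α β c z
    have h1 : α * α * A2 + β * β * B2 ≤ S := by rw [hα2, hβ2]; exact hSlow
    have m1 : c * (sa * sb) ≤ (α * β) * (sa * sb) :=
      mul_le_mul_of_nonneg_right hcαβ (mul_nonneg hsann hsbnn)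
    have m2 : c * (-(sa * sb)) ≤ c * z.re := mul_le_mul_of_nonneg_left hrez hc0.le
    have m3 : 2 * ((α * β) * (sa * sb)) ≤ α * α * A2 + β * β * B2 := by
      nlinarith only [sq_nonneg (α * sa - β * sb), hsa2, hsb2]
    linarith only [h1, m1, m2, m3]
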